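/- Let 0 ≤ α ≤ 1/30, 0 < β ≤ 1/30, λ = β/(1−2α+2β) and D = exp{λ(I₁−I) + λ(I₋₁−I)}. Then for every n = 1,2,… there exists a finite signed measure Θ on ℤ with ‖Θ‖_TV ≤ 1 such that D^{*n} = exp{0.5·n·β·(I₁−I)} * Θ. -/

import Mathlib

open scoped BigOperators

noncomputable section

/-- A (signed) measure on ℤ, represented by its point masses. -/
abbrev SM := ℤ → ℝ

/-- Point mass at `a ∈ ℤ`. -/
def dirac (a : ℤ) : SM := fun k => if k = a then 1 else 0

/-- Convolution of two measures on ℤ. -/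
def conv (M V : SM) : SM := fun m => ∑' k : ℤ, M (m - k) * V k

/-- Convolution powers, `convPow M 0 = I` (point mass at 0). -/
def convPow (M : SM) : ℕ → SM
  | 0 => dirac 0
  | n + 1 => conv (convPow M n) M

/-- Exponential of a measure: `exp M = ∑_{j≥0} M^{*j}/j!`. -/
def expSM (M : SM) : SM := fun k => ∑' j : ℕ, convPow M j k / (Nat.factorial j : ℝ)

/-- Total variation norm `‖M‖_TV = ∑_k |M{k}|`. -/
def tvNorm (M : SM) : ℝ := ∑' k : ℤ, |M k|

/-- Local (point) norm `‖M‖_∞ = sup_k |M{k}|`. -/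
def locNorm (M : SM) : ℝ := ⨆ k : ℤ, |M k|

/-- `M((-∞,k])`. -/
def cdf (M : SM) (k : ℤ) : ℝ := ∑' j : ℤ, if j ≤ k then M j else 0

/-- Wasserstein norm `‖M‖_W = ∑_k |M((-∞,k])|`. -/
def wNorm (M : SM) : ℝ := ∑' k : ℤ, |cdf M k|

/-- ℓ_r norm. -/
def lrNorm (r : ℝ) (M : SM) : ℝ := (∑' k : ℤ, |M k| ^ r) ^ (1 / r)

/-- L_r norm. -/
def LrNorm (r : ℝ) (M : SM) : ℝ := (∑' k : ℤ, |cdf M k| ^ r) ^ (1 / r)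

/-- Transition probabilities of the three-state Markov chain: states `0,1,2`
correspond to `a₁,a₂,a₃`; from `a₁` or `a₃` the probabilities are `(α, 1-2α, α)`,
from `a₂` they are `(β, 1-2β, β)`. -/
def transP (a b : ℝ) (i j : Fin 3) : ℝ :=
  if i = 1 then (if j = 1 then 1 - 2 * b else b) else (if j = 1 then 1 - 2 * a else a)

/-- Joint distribution of `(Sₙ, ξₙ)`, with `f(a₁)=-1, f(a₂)=0, f(a₃)=1`,
`Sₙ = f(ξ₁)+⋯+f(ξₙ)` and initial distribution `p`. -/
def jointDist (a b : ℝ) (p : Fin 3 → ℝ) : ℕ → ℤ → Fin 3 → ℝ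
  | 0 => fun k i => if k = 0 then p i else 0
  | n + 1 => fun k j =>
      ∑ i : Fin 3, jointDist a b p n (k - ((j : ℤ) - 1)) i * transP a b i j

/-- `Fₙ`, the distribution of `Sₙ`. -/
def F (a b : ℝ) (p : Fin 3 → ℝ) (n : ℕ) : SM := fun k => ∑ j : Fin 3, jointDist a b p n k j

/-- The symmetric Skellam distribution `D = exp{λ(I₁-I) + λ(I₋₁-I)}`,
`λ = β/(1-2α+2β)`. -/
def skellam (a b : ℝ) : SM :=
  expSM ((b / (1 - 2 * a + 2 * b)) • (dirac 1 - dirac 0)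
    + (b / (1 - 2 * a + 2 * b)) • (dirac (-1) - dirac 0))

/-- `L = (I₋₁ + I₁)/2`. -/
def Lm : SM := (2 : ℝ)⁻¹ • (dirac (-1) + dirac 1)

/-- `U = L - I`. -/
def Um : SM := Lm - dirac 0

/-- The measure `A₁` of the first-order asymptotic expansion. -/
def A1 (a b p2 : ℝ) : SM :=
  (2 * (a - b) / (1 - 2 * a + 2 * b) * ((1 - 2 * a) / (1 - 2 * a + 2 * b) - p2)) • Um

/-- The measure `A₂` of the first-order asymptotic expansion. -/
def A2 (a b : ℝ) : SM :=
  (2 * b / (1 - 2 * a + 2 * b) ^ 2 *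
    (2 * (a - b) * (1 - 2 * a) / (1 - 2 * a + 2 * b) - b)) • convPow Um 2

/-- The compound geometric law `H = (1-2α) Σ_j (2α)^j L^{*(j+1)}`. -/
def Hm (a : ℝ) : SM := fun k => ∑' j : ℕ, (1 - 2 * a) * (2 * a) ^ j * convPow Lm (j + 1) k

/-- `G = exp{(2β(1-2α)/(1-2α+2β))(H - I)}`. -/
def Gm (a b : ℝ) : SM := expSM ((2 * b * (1 - 2 * a) / (1 - 2 * a + 2 * b)) • (Hm a - dirac 0))

namespace Aux

abbrev A := AddMonoidAlgebra ℝ ℤ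

instance : CoeFun A (fun _ => ℤ → ℝ) := ⟨fun f => f.coeff⟩

def toSM (f : A) : SM := fun k => f k

lemma mul_apply_right' (f g : A) (x : ℤ) :
    (f * g) x = ∑ a ∈ g.coeff.support, f (x - a) * g a := by
  classical
  rw [AddMonoidAlgebra.coeff_mul_apply_right, Finsupp.sum]
  simp only [sub_eq_add_neg]

lemma conv_toSM (f g : A) : conv (toSM f) (toSM g) = toSM (f * g) := by
  classical
  funext m
  rw [conv]
  rw [tsum_eq_sum (s := g.coeff.support) (f := fun k => toSM f (m - k) * toSM g k)
    (fun k hk => by simp [toSM, Finsupp.notMem_support_iff.mp hk])]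
  rw [toSM, mul_apply_right' f g m]
  rfl

lemma toSM_one : toSM 1 = dirac 0 := by
  funext k
  simp only [toSM, AddMonoidAlgebra.one_def, AddMonoidAlgebra.coeff_single, dirac, Finsupp.single_apply]
  exact if_congr eq_comm rfl rfl

lemma convPow_toSM (f : A) : ∀ n, convPow (toSM f) n = toSM (f ^ n)
  | 0 => by rw [convPow, pow_zero, toSM_one]
  | n + 1 => by rw [convPow, convPow_toSM f n, conv_toSM, pow_succ]

def anorm (f : A) : ℝ := ∑ k ∈ f.coeff.support, |f k|

lemma anorm_nonneg (f : A) : 0 ≤ anorm f := Finset.sum_nonneg fun _ _ => abs_nonneg _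

lemma sum_abs_le_anorm (f : A) (s : Finset ℤ) : ∑ k ∈ s, |f k| ≤ anorm f := by
  classical
  have h1 : ∑ k ∈ s, |f k| = ∑ k ∈ s ∩ f.coeff.support, |f k| := by
    refine (Finset.sum_subset Finset.inter_subset_left ?_).symm
    intro x hx hnx
    have hfx : f x = 0 := by
      by_contra h
      exact hnx (Finset.mem_inter.mpr ⟨hx, Finsupp.mem_support_iff.mpr h⟩)
    simp [hfx]
  rw [h1, anorm]
  exact Finset.sum_le_sum_of_subset_of_nonneg Finset.inter_subset_right
    (fun _ _ _ => abs_nonneg _)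

lemma abs_apply_le_anorm (f : A) (k : ℤ) : |f k| ≤ anorm f := by
  simpa using sum_abs_le_anorm f {k}

lemma anorm_mul_le (f g : A) : anorm (f * g) ≤ anorm f * anorm g := by
  classical
  rw [anorm]
  calc ∑ x ∈ (f * g).coeff.support, |(f * g) x|
      ≤ ∑ x ∈ (f * g).coeff.support, ∑ a ∈ g.coeff.support, |f (x - a)| * |g a| := by
        refine Finset.sum_le_sum fun x _ => ?_
        rw [mul_apply_right']
        refine (Finset.abs_sum_le_sum_abs _ _).trans (le_of_eq ?_)
        exact Finset.sum_congr rfl fun a _ => abs_mul _ _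
    _ = ∑ a ∈ g.coeff.support, ∑ x ∈ (f * g).coeff.support, |f (x - a)| * |g a| := Finset.sum_comm
    _ ≤ ∑ a ∈ g.coeff.support, anorm f * |g a| := by
        refine Finset.sum_le_sum fun a _ => ?_
        rw [← Finset.sum_mul]
        refine mul_le_mul_of_nonneg_right ?_ (abs_nonneg _)
        calc ∑ x ∈ (f * g).coeff.support, |f (x - a)|
            = ∑ y ∈ (f * g).coeff.support.image (fun x => x - a), |f y| := by
              rw [Finset.sum_image (by intro x _ y _ h; simpa using h)]
          _ ≤ anorm f := sum_abs_le_anorm f _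
    _ = anorm f * anorm g := by simp only [anorm]; rw [Finset.mul_sum]

lemma anorm_one : anorm 1 = 1 := by
  classical
  rw [anorm, AddMonoidAlgebra.one_def, AddMonoidAlgebra.coeff_single, Finsupp.support_single_ne_zero _ one_ne_zero,
    Finset.sum_singleton, Finsupp.single_eq_same, abs_one]

lemma anorm_pow_le (f : A) : ∀ n : ℕ, anorm (f ^ n) ≤ anorm f ^ n
  | 0 => by rw [pow_zero, pow_zero, anorm_one]
  | n + 1 => by
      rw [pow_succ, pow_succ]
      exact (anorm_mul_le _ _).trans
        (mul_le_mul_of_nonneg_right (anorm_pow_le f n) (anorm_nonneg f))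

lemma abs_pow_apply_le (f : A) (n : ℕ) (k : ℤ) : |(f ^ n) k| ≤ anorm f ^ n :=
  (abs_apply_le_anorm _ k).trans (anorm_pow_le f n)


lemma expSM_toSM_apply (f : A) (k : ℤ) :
    expSM (toSM f) k = ∑' j : ℕ, (f ^ j) k / (Nat.factorial j : ℝ) := by
  rw [expSM]
  exact tsum_congr fun j => by rw [convPow_toSM]; rfl

lemma summable_expTerms_abs (f : A) (k : ℤ) :
    Summable (fun j : ℕ => |(f ^ j) k| / (Nat.factorial j : ℝ)) := by
  refine Summable.of_nonneg_of_le (fun j => by positivity) (fun j => ?_)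
    (Real.summable_pow_div_factorial (anorm f))
  have hj : (0:ℝ) < (Nat.factorial j : ℝ) := by exact_mod_cast Nat.factorial_pos j
  exact (div_le_div_iff_of_pos_right hj).mpr (abs_pow_apply_le f j k)

lemma summable_expTerms (f : A) (k : ℤ) :
    Summable (fun j : ℕ => (f ^ j) k / (Nat.factorial j : ℝ)) := by
  apply Summable.of_abs
  refine (summable_expTerms_abs f k).congr fun j => ?_
  simp [abs_div, Nat.abs_cast]

lemma tsum_prod_antidiagonal {h : ℕ × ℕ → ℝ} (hs : Summable h) :
    ∑' p : ℕ × ℕ, h p = ∑' n : ℕ, ∑ kl ∈ Finset.HasAntidiagonal.antidiagonal n, h kl := by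
  calc ∑' p : ℕ × ℕ, h p
      = ∑' c : (Σ n : ℕ, Finset.HasAntidiagonal.antidiagonal n), h (Finset.HasAntidiagonal.sigmaAntidiagonalEquivProd c) :=
        (Finset.HasAntidiagonal.sigmaAntidiagonalEquivProd.tsum_eq h).symm
    _ = ∑' (n : ℕ), ∑' (kl : Finset.HasAntidiagonal.antidiagonal n),
          h (Finset.HasAntidiagonal.sigmaAntidiagonalEquivProd ⟨n, kl⟩) :=
        Summable.tsum_sigma (Finset.HasAntidiagonal.sigmaAntidiagonalEquivProd.summable_iff.mpr hs)
    _ = ∑' n : ℕ, ∑ kl ∈ Finset.HasAntidiagonal.antidiagonal n, h kl := by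
        refine tsum_congr fun n => ?_
        rw [tsum_fintype]
        simp only [Finset.HasAntidiagonal.sigmaAntidiagonalEquivProd_apply]
        exact Finset.sum_finset_coe (f := h) _

lemma exp_add (f g : A) :
    conv (expSM (toSM f)) (expSM (toSM g)) = expSM (toSM (f + g)) := by
  classical
  funext m
  set E : ℕ × ℕ → ℤ → ℝ :=
    fun p k => ((f ^ p.1) (m - k) / (Nat.factorial p.1 : ℝ))
      * ((g ^ p.2) k / (Nat.factorial p.2 : ℝ)) with hE_def
  have hEabs : ∀ (p : ℕ × ℕ) (k : ℤ), |E p k|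
      = (|(f ^ p.1) (m - k)| / (Nat.factorial p.1 : ℝ))
        * (|(g ^ p.2) k| / (Nat.factorial p.2 : ℝ)) := by
    intro p k
    simp [hE_def, abs_mul, abs_div, Nat.abs_cast]
  have hslice : ∀ p : ℕ × ℕ, Summable fun k : ℤ => |E p k| := by
    intro p
    refine summable_of_ne_finset_zero (s := (g ^ p.2).coeff.support) (fun k hk => ?_)
    simp [hE_def, Finsupp.notMem_support_iff.mp hk]
  have hsliceSum : ∀ p : ℕ × ℕ, (∑' k : ℤ, |E p k|)
      ≤ (anorm f ^ p.1 / (Nat.factorial p.1 : ℝ))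
        * (anorm g ^ p.2 / (Nat.factorial p.2 : ℝ)) := by
    intro p
    rw [tsum_eq_sum (s := (g ^ p.2).coeff.support) (fun k hk => by
      simp [hE_def, Finsupp.notMem_support_iff.mp hk])]
    have h1 : ∀ k ∈ (g ^ p.2).coeff.support, |E p k|
        ≤ (anorm f ^ p.1 / (Nat.factorial p.1 : ℝ)) * (|(g ^ p.2) k| / (Nat.factorial p.2 : ℝ)) := by
      intro k _
      rw [hEabs]
      have hp1 : (0:ℝ) < (Nat.factorial p.1 : ℝ) := by exact_mod_cast Nat.factorial_pos p.1
      exact mul_le_mul_of_nonneg_right ((div_le_div_iff_of_pos_right hp1).mpr (abs_pow_apply_le f p.1 (m - k)))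
        (by positivity)
    refine (Finset.sum_le_sum h1).trans ?_
    rw [← Finset.mul_sum, ← Finset.sum_div]
    have hp2 : (0:ℝ) < (Nat.factorial p.2 : ℝ) := by exact_mod_cast Nat.factorial_pos p.2
    refine mul_le_mul_of_nonneg_left ?_
      (div_nonneg (pow_nonneg (anorm_nonneg f) _) (Nat.cast_nonneg _))
    exact (div_le_div_iff_of_pos_right hp2).mpr ((sum_abs_le_anorm _ _).trans (anorm_pow_le g p.2))
  have hboundSummable : Summable (fun p : ℕ × ℕ =>
      (anorm f ^ p.1 / (Nat.factorial p.1 : ℝ)) * (anorm g ^ p.2 / (Nat.factorial p.2 : ℝ))) :=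
    (Real.summable_pow_div_factorial (anorm f)).mul_of_nonneg
      (Real.summable_pow_div_factorial (anorm g))
      (fun j => div_nonneg (pow_nonneg (anorm_nonneg f) _) (Nat.cast_nonneg _))
      (fun j => div_nonneg (pow_nonneg (anorm_nonneg g) _) (Nat.cast_nonneg _))
  have hEabsSummable : Summable (fun q : (ℕ × ℕ) × ℤ => |E q.1 q.2|) := by
    rw [summable_prod_of_nonneg (fun q => abs_nonneg _)]
    refine ⟨fun p => hslice p, ?_⟩
    exact Summable.of_nonneg_of_le (fun p => tsum_nonneg fun k => abs_nonneg _)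
      hsliceSum hboundSummable
  have hESummable : Summable (fun q : (ℕ × ℕ) × ℤ => E q.1 q.2) :=
    Summable.of_abs hEabsSummable
  have inner_eq : ∀ p : ℕ × ℕ, (∑' k : ℤ, E p k)
      = (f ^ p.1 * g ^ p.2) m / ((Nat.factorial p.1 : ℝ) * (Nat.factorial p.2 : ℝ)) := by
    intro p
    rw [tsum_eq_sum (s := (g ^ p.2).coeff.support) (fun k hk => by
      simp [hE_def, Finsupp.notMem_support_iff.mp hk])]
    rw [mul_apply_right', Finset.sum_div]
    exact Finset.sum_congr rfl fun k _ => div_mul_div_comm _ _ _ _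
  calc conv (expSM (toSM f)) (expSM (toSM g)) m
      = ∑' k : ℤ, (expSM (toSM f)) (m - k) * (expSM (toSM g)) k := rfl
    _ = ∑' k : ℤ, ∑' p : ℕ × ℕ, E p k := by
        refine tsum_congr fun k => ?_
        rw [expSM_toSM_apply, expSM_toSM_apply]
        exact Summable.tsum_mul_tsum (summable_expTerms f (m - k)) (summable_expTerms g k)
          (hESummable.comp_injective (i := fun p : ℕ × ℕ => (p, k))
            (fun p q h => (Prod.ext_iff.mp h).1))
    _ = ∑' p : ℕ × ℕ, ∑' k : ℤ, E p k := Summable.tsum_comm hESummable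
    _ = ∑' p : ℕ × ℕ, (f ^ p.1 * g ^ p.2) m
          / ((Nat.factorial p.1 : ℝ) * (Nat.factorial p.2 : ℝ)) := tsum_congr inner_eq
    _ = ∑' n : ℕ, ∑ kl ∈ Finset.HasAntidiagonal.antidiagonal n,
          (f ^ kl.1 * g ^ kl.2) m / ((Nat.factorial kl.1 : ℝ) * (Nat.factorial kl.2 : ℝ)) := by
        refine tsum_prod_antidiagonal ?_
        exact (hESummable.prod).congr inner_eq
    _ = ∑' n : ℕ, ((f + g) ^ n) m / (Nat.factorial n : ℝ) := by
        refine tsum_congr fun n => ?_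
        rw [Commute.add_pow' (Commute.all f g) n, AddMonoidAlgebra.coeff_sum, Finset.sum_apply', Finset.sum_div]
        refine Finset.sum_congr rfl fun kl hkl => ?_
        have hkl' : kl.1 + kl.2 = n := Finset.HasAntidiagonal.mem_antidiagonal.mp hkl
        have happ : (n.choose kl.1 • (f ^ kl.1 * g ^ kl.2)) m
            = (n.choose kl.1 : ℝ) * (f ^ kl.1 * g ^ kl.2) m := by
          rw [AddMonoidAlgebra.coeff_smul, Finsupp.smul_apply, nsmul_eq_mul]
        have hnat : (n.choose kl.1) * Nat.factorial kl.1 * Nat.factorial kl.2 = Nat.factorial n := by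
          rw [Nat.mul_right_comm, ← hkl', Nat.add_comm kl.1 kl.2]
          exact Nat.add_choose_mul_factorial_mul_factorial kl.2 kl.1
        have hnat' : ((n.choose kl.1 : ℝ)) * (Nat.factorial kl.1 : ℝ) * (Nat.factorial kl.2 : ℝ)
            = (Nat.factorial n : ℝ) := by exact_mod_cast congrArg (Nat.cast (R := ℝ)) hnat
        have h1 : (Nat.factorial kl.1 : ℝ) ≠ 0 := by exact_mod_cast (Nat.factorial_pos _).ne'
        have h2 : (Nat.factorial kl.2 : ℝ) ≠ 0 := by exact_mod_cast (Nat.factorial_pos _).ne'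
        have h3 : (Nat.factorial n : ℝ) ≠ 0 := by exact_mod_cast (Nat.factorial_pos _).ne'
        rw [happ, div_eq_div_iff (mul_ne_zero h1 h2) h3]
        linear_combination ((f ^ kl.1 * g ^ kl.2) m) * hnat'.symm
    _ = expSM (toSM (f + g)) m := (expSM_toSM_apply _ _).symm


lemma one_apply' (k : ℤ) : (1 : A) k = dirac 0 k := by
  rw [AddMonoidAlgebra.one_def, AddMonoidAlgebra.coeff_single, Finsupp.single_apply, dirac]
  exact if_congr eq_comm rfl rfl

lemma expSM_toSM_zero : expSM (toSM (0 : A)) = dirac 0 := by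
  funext k
  rw [expSM_toSM_apply, tsum_eq_single 0 (fun j hj => by rw [zero_pow hj]; simp)]
  rw [pow_zero, Nat.factorial_zero, Nat.cast_one, div_one, one_apply']

lemma convPow_expSM (f : A) : ∀ n : ℕ, convPow (expSM (toSM f)) n = expSM (toSM (n • f))
  | 0 => by rw [convPow, zero_smul, expSM_toSM_zero]
  | n + 1 => by rw [convPow, convPow_expSM f n, exp_add, succ_nsmul]

lemma conv_smul_dirac (M : SM) (c : ℝ) : conv M (c • dirac 0) = c • M := by
  funext m
  rw [conv, tsum_eq_single 0 (fun k hk => by simp [dirac, hk])]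
  simp [dirac, mul_comm]

lemma expSM_smul_one (c : ℝ) : expSM (toSM (c • (1 : A))) = Real.exp c • dirac 0 := by
  funext k
  rw [expSM_toSM_apply]
  have h1 : ∀ j : ℕ, ((c • (1 : A)) ^ j) k = c ^ j * dirac 0 k := by
    intro j
    rw [smul_pow, one_pow, AddMonoidAlgebra.coeff_smul_apply, smul_eq_mul, one_apply']
  calc ∑' j : ℕ, ((c • (1 : A)) ^ j) k / (Nat.factorial j : ℝ)
      = ∑' j : ℕ, (c ^ j / (Nat.factorial j : ℝ)) * dirac 0 k := by
        refine tsum_congr fun j => ?_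
        rw [h1]; ring
    _ = (∑' j : ℕ, c ^ j / (Nat.factorial j : ℝ)) * dirac 0 k := tsum_mul_right
    _ = Real.exp c * dirac 0 k := by
        rw [Real.exp_eq_exp_ℝ, NormedSpace.exp_eq_tsum_div]
    _ = (Real.exp c • dirac 0) k := rfl

def phi : A →ₐ[ℝ] ℝ := AddMonoidAlgebra.lift ℝ ℝ ℤ 1

lemma phi_apply (f : A) : phi f = ∑ k ∈ f.coeff.support, f k := by
  rw [phi, AddMonoidAlgebra.lift_apply, Finsupp.sum]
  exact Finset.sum_congr rfl fun k _ => by simp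

lemma phi_single (a : ℤ) (c : ℝ) : phi (AddMonoidAlgebra.single a c) = c := by
  rw [phi, AddMonoidAlgebra.lift_single]; simp

lemma tsum_eq_phi (f : A) : ∑' k : ℤ, f k = phi f := by
  rw [tsum_eq_sum (s := f.coeff.support) (fun k hk => Finsupp.notMem_support_iff.mp hk), phi_apply]

lemma pow_apply_nonneg {f : A} (hf : ∀ k, 0 ≤ f k) : ∀ (n : ℕ) (k : ℤ), 0 ≤ (f ^ n) k
  | 0, k => by
      rw [pow_zero, one_apply']
      by_cases h : k = (0 : ℤ) <;> simp [dirac, h]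
  | n + 1, k => by
      rw [pow_succ, mul_apply_right']
      exact Finset.sum_nonneg fun a _ => mul_nonneg (pow_apply_nonneg hf n _) (hf a)

lemma tvNorm_exp_centered {p : A} (hp : ∀ k, 0 ≤ p k) :
    tvNorm (expSM (toSM (p - phi p • (1 : A)))) = 1 := by
  classical
  set t := phi p with ht
  have hsplit : p - t • (1 : A) = p + (-t) • (1 : A) := by
    rw [neg_smul, ← sub_eq_add_neg]
  have key : expSM (toSM (p - t • (1 : A))) = Real.exp (-t) • expSM (toSM p) := by
    rw [hsplit, ← exp_add, expSM_smul_one, conv_smul_dirac]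
  rw [key, tvNorm]
  set W : ℕ × ℤ → ℝ := fun q => (p ^ q.1) q.2 / (Nat.factorial q.1 : ℝ) with hW
  have hWnonneg : ∀ q, 0 ≤ W q :=
    fun q => div_nonneg (pow_apply_nonneg hp _ _) (Nat.cast_nonneg _)
  have hWslices : ∀ j : ℕ, Summable fun k : ℤ => W (j, k) := fun j =>
    summable_of_ne_finset_zero (s := (p ^ j).coeff.support)
      (fun k hk => by simp [hW, Finsupp.notMem_support_iff.mp hk])
  have hmass : ∀ j : ℕ, (∑' k : ℤ, W (j, k)) = t ^ j / (Nat.factorial j : ℝ) := by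
    intro j
    rw [hW]
    simp only
    rw [tsum_div_const, tsum_eq_phi, map_pow]
  have hWsummable : Summable W := by
    rw [summable_prod_of_nonneg hWnonneg]
    exact ⟨hWslices, (Real.summable_pow_div_factorial t).congr fun j => (hmass j).symm⟩
  have hexp_nonneg : ∀ k, 0 ≤ expSM (toSM p) k := fun k => by
    rw [expSM_toSM_apply]
    exact tsum_nonneg fun j => div_nonneg (pow_apply_nonneg hp _ _) (Nat.cast_nonneg _)
  have habs : ∀ k : ℤ, |(Real.exp (-t) • expSM (toSM p)) k|
      = Real.exp (-t) * expSM (toSM p) k := by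
    intro k
    rw [Pi.smul_apply, smul_eq_mul, abs_mul, abs_of_nonneg (Real.exp_pos _).le,
      abs_of_nonneg (hexp_nonneg k)]
  calc ∑' k : ℤ, |(Real.exp (-t) • expSM (toSM p)) k|
      = ∑' k : ℤ, Real.exp (-t) * expSM (toSM p) k := tsum_congr habs
    _ = Real.exp (-t) * ∑' k : ℤ, expSM (toSM p) k := tsum_mul_left
    _ = Real.exp (-t) * Real.exp t := by
        congr 1
        calc ∑' k : ℤ, expSM (toSM p) k
            = ∑' (k : ℤ) (j : ℕ), W (j, k) := tsum_congr fun k => by rw [expSM_toSM_apply]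
          _ = ∑' (j : ℕ) (k : ℤ), W (j, k) := Summable.tsum_comm hWsummable
          _ = ∑' j : ℕ, t ^ j / (Nat.factorial j : ℝ) := tsum_congr hmass
          _ = Real.exp t := by rw [Real.exp_eq_exp_ℝ, NormedSpace.exp_eq_tsum_div]
    _ = 1 := by rw [← Real.exp_add]; simp


def u (a : ℤ) : A := AddMonoidAlgebra.single a 1 - AddMonoidAlgebra.single 0 1

lemma single_apply_dirac (a k : ℤ) : (Finsupp.single a (1 : ℝ)) k = dirac a k := by
  rw [Finsupp.single_apply, dirac]
  exact if_congr eq_comm rfl rfl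

lemma toSM_comb (r s : ℝ) (a1 a2 : ℤ) :
    toSM (r • u a1 + s • u a2) = r • (dirac a1 - dirac 0) + s • (dirac a2 - dirac 0) := by
  funext k
  show r * ((Finsupp.single a1 (1:ℝ)) k - (Finsupp.single 0 (1:ℝ)) k)
      + s * ((Finsupp.single a2 (1:ℝ)) k - (Finsupp.single 0 (1:ℝ)) k)
    = r * (dirac a1 k - dirac 0 k) + s * (dirac a2 k - dirac 0 k)
  rw [single_apply_dirac, single_apply_dirac, single_apply_dirac]

lemma toSM_single_comb (r : ℝ) (a1 : ℤ) :
    toSM (r • u a1) = r • (dirac a1 - dirac 0) := by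
  funext k
  show r * ((Finsupp.single a1 (1:ℝ)) k - (Finsupp.single 0 (1:ℝ)) k)
    = r * (dirac a1 k - dirac 0 k)
  rw [single_apply_dirac, single_apply_dirac]

lemma main_chain (lam c x y : ℝ) (n : ℕ) (hx : x = n * lam - c) (hy : y = n * lam) :
    convPow (expSM (toSM (lam • u 1 + lam • u (-1)))) n
      = conv (expSM (toSM (c • u 1))) (expSM (toSM (x • u 1 + y • u (-1)))) := by
  have hXY : (n • (lam • u 1 + lam • u (-1)) : A) = c • u 1 + (x • u 1 + y • u (-1)) := by
    subst hx hy
    rw [← Nat.cast_smul_eq_nsmul ℝ]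
    module
  rw [convPow_expSM, hXY, ← exp_add]

lemma theta_split (x y : ℝ) :
    x • u 1 + y • u (-1)
      = (x • AddMonoidAlgebra.single 1 1 + y • AddMonoidAlgebra.single (-1) 1)
        - phi (x • AddMonoidAlgebra.single 1 1 + y • AddMonoidAlgebra.single (-1) 1) • (1 : A) := by
  rw [map_add, map_smul, map_smul, phi_single, phi_single, smul_eq_mul, smul_eq_mul,
    mul_one, mul_one, AddMonoidAlgebra.one_def]
  simp only [u]
  module

end Aux

theorem aux_skellam_pow :
    ∀ (a b : ℝ), 0 ≤ a → a ≤ 1 / 30 → 0 < b → b ≤ 1 / 30 →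
      ∀ n : ℕ, 1 ≤ n →
      ∃ Θ : SM, tvNorm Θ ≤ 1 ∧
        convPow (expSM ((b / (1 - 2 * a + 2 * b)) • (dirac 1 - dirac 0)
          + (b / (1 - 2 * a + 2 * b)) • (dirac (-1) - dirac 0))) n =
          conv (expSM ((0.5 * n * b) • (dirac 1 - dirac 0))) Θ := by
  intro a b ha0 ha hb0 hb n hn
  classical
  have hden : 0 < 1 - 2 * a + 2 * b := by linarith
  have hlam2 : b / 2 ≤ b / (1 - 2 * a + 2 * b) := by
    rw [div_le_div_iff₀ (by norm_num) hden]
    nlinarith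
  have hx0 : (0 : ℝ) ≤ (n : ℝ) * (b / (1 - 2 * a + 2 * b)) - 0.5 * n * b := by
    have hn0 : (0 : ℝ) ≤ (n : ℝ) := Nat.cast_nonneg n
    nlinarith
  have hy0 : (0 : ℝ) ≤ (n : ℝ) * (b / (1 - 2 * a + 2 * b)) := by
    have hn0 : (0 : ℝ) ≤ (n : ℝ) := Nat.cast_nonneg n
    have : 0 < b / (1 - 2 * a + 2 * b) := div_pos hb0 hden
    positivity
  set lam : ℝ := b / (1 - 2 * a + 2 * b) with hlam
  set c : ℝ := 0.5 * n * b with hc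
  set x : ℝ := (n : ℝ) * lam - c with hx
  set y : ℝ := (n : ℝ) * lam with hy
  refine ⟨expSM (Aux.toSM (x • Aux.u 1 + y • Aux.u (-1))), ?_, ?_⟩
  · -- tvNorm bound
    have hp_nonneg : ∀ k, 0 ≤ (x • AddMonoidAlgebra.single 1 1 + y • AddMonoidAlgebra.single (-1) 1 : Aux.A) k := by
      intro k
      show 0 ≤ x * (Finsupp.single (1:ℤ) (1:ℝ)) k + y * (Finsupp.single (-1:ℤ) (1:ℝ)) k
      refine add_nonneg (mul_nonneg hx0 ?_) (mul_nonneg hy0 ?_) <;>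
        (rw [Finsupp.single_apply]; split <;> norm_num)
    rw [Aux.theta_split, Aux.tvNorm_exp_centered hp_nonneg]
  · rw [← Aux.toSM_comb lam lam 1 (-1)]
    rw [Aux.main_chain lam c x y n hx hy]
    rw [Aux.toSM_single_comb]



theorem skellam_pow_factorization :
    ∀ (a b : ℝ), 0 ≤ a → a ≤ 1 / 30 → 0 < b → b ≤ 1 / 30 →
      ∀ n : ℕ, 1 ≤ n →
      ∃ Θ : SM, tvNorm Θ ≤ 1 ∧
        convPow (skellam a b) n =
          conv (expSM ((0.5 * n * b) • (dirac 1 - dirac 0))) Θ := by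
  intro a b ha0 ha hb0 hb n hn
  obtain ⟨Θ, h1, h2⟩ := aux_skellam_pow a b ha0 ha hb0 hb n hn
  exact ⟨Θ, h1, by rw [skellam]; exact h2⟩
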